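/- Let R be the relational structure on the leaf set E of the infinite ordered tree T (each internal node of T has infinitely many children, alternating leaves and copies of T), consisting of the infix linear order on leaves and the three ternary relations recording the 3-leaf contraction type. Then the minimal monomorphic decomposition of R is the partition into singletons: no two-element subset of E is a monomorphic part of R. -/

import Mathlib

/-- A relational structure on a base set (type) `E`: a family of finitary relations on `E`. -/
structure RelStruct (E : Type*) where
  ι : Type*
  arity : ι → ℕ
  rel : ∀ i : ι, (Fin (arity i) → E) → Prop

/-- The substructures induced by `R` on `A` and `B` are isomorphic: there is a bijection
`A ≃ B` transporting every relation of `R` restricted to `A` onto its restriction to `B`. -/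
def RelStruct.Iso {E : Type*} (R : RelStruct E) (A B : Set E) : Prop :=
  ∃ e : A ≃ B, ∀ (i : R.ι) (v : Fin (R.arity i) → A),
    R.rel i (fun j => (v j : E)) ↔ R.rel i (fun j => (e (v j) : E))

/-- `F` is a monomorphic part of `R`: any two finite subsets of the same cardinality which
agree outside `F` induce isomorphic substructures. -/
def IsMonoPart {E : Type*} (R : RelStruct E) (F : Set E) : Prop :=
  ∀ A A' : Set E, A.Finite → A'.Finite → A.ncard = A'.ncard → A \ F = A' \ F →
    R.Iso A A'

/-- A collection `P` of subsets of `E` (a set partition of `E`) is a monomorphic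
decomposition of `R` if any two finite subsets meeting every block in the same number of
elements induce isomorphic substructures. -/
def IsMonoDecomp {E : Type*} (R : RelStruct E) (P : Set (Set E)) : Prop :=
  ∀ A A' : Set E, A.Finite → A'.Finite →
    (∀ p ∈ P, (A ∩ p).ncard = (A' ∩ p).ncard) → R.Iso A A'

/-- Indexed variant: a family `(B x)_{x ∈ X}` of subsets of `E` is a monomorphic
decomposition of `R` if any two finite subsets meeting every block in the same number of
elements induce isomorphic substructures. -/
def IsMonoDecompFam {E : Type*} {X : Type*} (R : RelStruct E) (B : X → Set E) : Prop :=
  ∀ A A' : Set E, A.Finite → A'.Finite →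
    (∀ x : X, (A ∩ B x).ncard = (A' ∩ B x).ncard) → R.Iso A A'

/-- The leaves of the infinite rooted ordered tree `T` in which every internal node has
infinitely many children, alternately a leaf (at the even child positions `2k`) and a copy of
`T` (at the odd child positions `2j+1`): a leaf is encoded by the list of successive
subtree-children chosen, together with the final leaf-child index. -/
def TreeLeaf : Type := List ℕ × ℕ

/-- The path of child indices from the root of `T` to a leaf. -/
def leafPath (x : TreeLeaf) : List ℕ := x.1.map (fun j => 2 * j + 1) ++ [2 * x.2]

/-- The left-to-right infix order on the leaves of `T`: lexicographic order on paths. -/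
def leafLt (x y : TreeLeaf) : Prop := List.Lex (· < ·) (leafPath x) (leafPath y)

/-- Length of the longest common prefix of two lists (the depth of the meet of two leaves). -/
def cpl : List ℕ → List ℕ → ℕ
  | a :: s, b :: t => if a = b then cpl s t + 1 else 0
  | _, _ => 0

/-- The relational structure `R` on the leaves of `T`: the infix linear order `<`, together
with, for each of the three reduced trees with `3` leaves, the ternary relation holding on the
triples `x < y < z` whose contraction `T|{x,y,z}` is that tree.  For `x < y < z`, the
contraction is `(∘,(∘,∘))`, `(∘,∘,∘)` or `((∘,∘),∘)` according to whether the meet of `x,y` is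
strictly higher than, at the same depth as, or strictly deeper than the meet of `y,z`. -/
def treeStruct : RelStruct TreeLeaf where
  ι := Option (Fin 3)
  arity := fun i => match i with | none => 2 | some _ => 3
  rel := fun i => match i with
    | none => fun v => leafLt (v 0) (v 1)
    | some t => fun v => leafLt (v 0) (v 1) ∧ leafLt (v 1) (v 2) ∧
        (if t = 0 then
          cpl (leafPath (v 0)) (leafPath (v 1)) < cpl (leafPath (v 1)) (leafPath (v 2))
        else if t = 1 then
          cpl (leafPath (v 0)) (leafPath (v 1)) = cpl (leafPath (v 1)) (leafPath (v 2))
        else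
          cpl (leafPath (v 0)) (leafPath (v 1)) > cpl (leafPath (v 1)) (leafPath (v 2)))

/- ## Auxiliary lemmas -/

section Aux

private lemma cpl_append' (s : List ℕ) (x y : ℕ) (u v : List ℕ) (h : x ≠ y) :
    cpl (s ++ x :: u) (s ++ y :: v) = s.length := by
  induction s with
  | nil => simp [cpl, h]
  | cons a t ih => simp [cpl, ih]

private lemma lex_of_lt' (s : List ℕ) {x y : ℕ} (u v : List ℕ) (h : x < y) :
    List.Lex (· < ·) (s ++ x :: u) (s ++ y :: v) :=
  List.Lex.append_left _ (List.Lex.rel h) s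

private lemma lex_trans' {p q r : List ℕ} (h1 : List.Lex (· < ·) p q)
    (h2 : List.Lex (· < ·) q r) : List.Lex (· < ·) p r := List.lt_trans h1 h2

private lemma lex_tricho' (p q : List ℕ) :
    List.Lex (· < ·) p q ∨ p = q ∨ List.Lex (· < ·) q p := trichotomous p q

private lemma leafLt_trans' {a b c : TreeLeaf} (h1 : leafLt a b) (h2 : leafLt b c) :
    leafLt a c := lex_trans' h1 h2

private lemma leafLt_irrefl' (a : TreeLeaf) : ¬ leafLt a a := irrefl (leafPath a)

private lemma leafLt_ne {a b : TreeLeaf} (h : leafLt a b) : a ≠ b := by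
  rintro rfl; exact leafLt_irrefl' a h

private lemma lex_decomp' {p q : List ℕ} (h : List.Lex (· < ·) p q) :
    p <+: q ∨ ∃ s x u y v, p = s ++ x :: u ∧ q = s ++ y :: v ∧ x < y := by
  induction h with
  | nil => left; exact ⟨_, rfl⟩
  | @cons a l₁ l₂ h ih =>
      rcases ih with ⟨t, rfl⟩ | ⟨s, x, u, y, v, h1, h2, hxy⟩
      · left; exact ⟨t, rfl⟩
      · right; exact ⟨a :: s, x, u, y, v, by simp [h1], by simp [h2], hxy⟩
  | @rel a₁ l₁ a₂ l₂ h => right; exact ⟨[], a₁, l₁, a₂, l₂, rfl, rfl, h⟩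

private lemma prefix_eq' : ∀ (l₁ : List ℕ) (n₁ : ℕ) (l₂ : List ℕ) (n₂ : ℕ),
    (List.map (fun j => 2 * j + 1) l₁ ++ [2 * n₁]) <+:
      (List.map (fun j => 2 * j + 1) l₂ ++ [2 * n₂]) →
    l₁ = l₂ ∧ n₁ = n₂ := by
  intro l₁
  induction l₁ with
  | nil =>
      intro n₁ l₂ n₂ ⟨r, hr⟩
      cases l₂ with
      | nil => simp at hr; exact ⟨rfl, hr.1⟩
      | cons j t => simp at hr; omega
  | cons i s ih =>
      intro n₁ l₂ n₂ ⟨r, hr⟩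
      cases l₂ with
      | nil => simp at hr
      | cons j t =>
          simp at hr
          have := ih n₁ t n₂ ⟨r, by simpa using hr.2⟩
          exact ⟨by rw [this.1, hr.1], this.2⟩

private lemma path_split' : ∀ (l : List ℕ) (n : ℕ) (s : List ℕ) (x : ℕ) (u : List ℕ),
    List.map (fun j => 2 * j + 1) l ++ [2 * n] = s ++ x :: u →
    (s = List.map (fun j => 2 * j + 1) l ∧ x = 2 * n ∧ u = []) ∨
    (∃ w, List.map (fun j => 2 * j + 1) l = s ++ x :: w) := by
  intro l
  induction l with
  | nil =>
      intro n s x u h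
      simp at h
      left
      cases s with
      | nil => simp at h ⊢; tauto
      | cons a s' => simp at h
  | cons i t ih =>
      intro n s x u h
      cases s with
      | nil =>
          right
          simp at h
          exact ⟨List.map (fun j => 2 * j + 1) t, by simp [h.1]⟩
      | cons a s' =>
          simp at h
          obtain ⟨rfl, h⟩ := h
          rcases ih n s' x u h with ⟨rfl, hx, hu⟩ | ⟨w, hw⟩
          · left; simp [hx, hu]
          · right; exact ⟨w, by simp [hw]⟩

private lemma leafLt_total (a b : TreeLeaf) : leafLt a b ∨ a = b ∨ leafLt b a := by
  rcases lex_tricho' (leafPath a) (leafPath b) with h | h | h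
  · exact Or.inl h
  · have hpre : leafPath a <+: leafPath b := by rw [h]
    obtain ⟨h1, h2⟩ := prefix_eq' a.1 a.2 b.1 b.2 hpre
    exact Or.inr (Or.inl (Prod.ext h1 h2))
  · exact Or.inr (Or.inr h)

private lemma chain3 {x' y' z' u₁ u₂ u₃ : TreeLeaf} (h1 : leafLt x' y') (h2 : leafLt y' z')
    (m1 : u₁ = x' ∨ u₁ = y' ∨ u₁ = z') (m2 : u₂ = x' ∨ u₂ = y' ∨ u₂ = z')
    (m3 : u₃ = x' ∨ u₃ = y' ∨ u₃ = z')
    (o1 : leafLt u₁ u₂) (o2 : leafLt u₂ u₃) : u₁ = x' ∧ u₂ = y' ∧ u₃ = z' := by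
  have h3 : leafLt x' z' := leafLt_trans' h1 h2
  rcases m1 with rfl|rfl|rfl <;> rcases m2 with rfl|rfl|rfl <;> rcases m3 with rfl|rfl|rfl <;>
    first
      | exact ⟨rfl, rfl, rfl⟩
      | exact (leafLt_irrefl' _ o1).elim
      | exact (leafLt_irrefl' _ o2).elim
      | exact (leafLt_irrefl' _ (leafLt_trans' o1 h1)).elim
      | exact (leafLt_irrefl' _ (leafLt_trans' o1 h2)).elim
      | exact (leafLt_irrefl' _ (leafLt_trans' o1 h3)).elim
      | exact (leafLt_irrefl' _ (leafLt_trans' o2 h1)).elim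
      | exact (leafLt_irrefl' _ (leafLt_trans' o2 h2)).elim
      | exact (leafLt_irrefl' _ (leafLt_trans' o2 h3)).elim

private lemma not_iso {x y z x' y' z' : TreeLeaf}
    (hxy : leafLt x y) (hyz : leafLt y z) (hxy' : leafLt x' y') (hyz' : leafLt y' z')
    (t : Fin 3)
    (ht : treeStruct.rel (some t) ![x, y, z])
    (ht' : ¬ treeStruct.rel (some t) ![x', y', z']) :
    ¬ treeStruct.Iso ({x, y, z} : Set TreeLeaf) {x', y', z'} := by
  rintro ⟨e, he⟩
  have hx : x ∈ ({x, y, z} : Set TreeLeaf) := by simp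
  have hy : y ∈ ({x, y, z} : Set TreeLeaf) := by simp
  have hz : z ∈ ({x, y, z} : Set TreeLeaf) := by simp
  set X : ({x, y, z} : Set TreeLeaf) := ⟨x, hx⟩
  set Y : ({x, y, z} : Set TreeLeaf) := ⟨y, hy⟩
  set Z : ({x, y, z} : Set TreeLeaf) := ⟨z, hz⟩
  have ord : ∀ U V : ({x, y, z} : Set TreeLeaf),
      leafLt (U : TreeLeaf) V ↔ leafLt (e U : TreeLeaf) (e V) := by
    intro U V
    have h := he none ![U, V]
    simpa [treeStruct] using h
  have o1 : leafLt (e X : TreeLeaf) (e Y) := (ord X Y).mp hxy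
  have o2 : leafLt (e Y : TreeLeaf) (e Z) := (ord Y Z).mp hyz
  have mem : ∀ W : ({x', y', z'} : Set TreeLeaf),
      (W : TreeLeaf) = x' ∨ (W : TreeLeaf) = y' ∨ (W : TreeLeaf) = z' := by
    rintro ⟨w, hw⟩
    simpa only [Set.mem_insert_iff, Set.mem_singleton_iff] using hw
  have m1 := mem (e X)
  have m2 := mem (e Y)
  have m3 := mem (e Z)
  obtain ⟨e1, e2, e3⟩ := chain3 hxy' hyz' m1 m2 m3 o1 o2
  have h : treeStruct.rel (some t) (fun j : Fin 3 => ((![X, Y, Z] j : _) : TreeLeaf)) ↔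
      treeStruct.rel (some t) (fun j : Fin 3 => ((e (![X, Y, Z] j) : _) : TreeLeaf)) :=
    he (some t) ![X, Y, Z]
  have hL : (fun j : Fin 3 => ((![X, Y, Z] j : _) : TreeLeaf)) = ![x, y, z] := by
    funext j; fin_cases j <;> rfl
  have hR : (fun j : Fin 3 => ((e (![X, Y, Z] j) : _) : TreeLeaf)) = ![x', y', z'] := by
    funext j; fin_cases j <;> simp [e1, e2, e3]
  rw [hL, hR] at h
  exact ht' (h.mp ht)

/-- the triple relation `t` on an ascending triple, unfolded. -/
private lemma rel_some_iff (t : Fin 3) (x y z : TreeLeaf) :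
    treeStruct.rel (some t) ![x, y, z] ↔
      leafLt x y ∧ leafLt y z ∧
        (if t = 0 then cpl (leafPath x) (leafPath y) < cpl (leafPath y) (leafPath z)
         else if t = 1 then cpl (leafPath x) (leafPath y) = cpl (leafPath y) (leafPath z)
         else cpl (leafPath x) (leafPath y) > cpl (leafPath y) (leafPath z)) := by
  rfl

private lemma key (a b : TreeLeaf) (hab : leafLt a b) :
    ∃ c d : TreeLeaf, a ≠ c ∧ a ≠ d ∧ b ≠ c ∧ b ≠ d ∧ c ≠ d ∧
      ¬ treeStruct.Iso (insert a {c, d}) (insert b {c, d}) := by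
  obtain ⟨l₁, n₁⟩ := a
  obtain ⟨l₂, n₂⟩ := b
  rcases lex_decomp' hab with hpre | ⟨s, x, u, y, v, hp, hq, hxy⟩
  · obtain ⟨h1, h2⟩ := prefix_eq' l₁ n₁ l₂ n₂ hpre
    exact absurd (Prod.ext h1 h2 : ((l₁, n₁) : TreeLeaf) = (l₂, n₂)) (leafLt_ne hab)
  have hp' : List.map (fun j => 2 * j + 1) l₁ ++ [2 * n₁] = s ++ x :: u := hp
  have hq' : List.map (fun j => 2 * j + 1) l₂ ++ [2 * n₂] = s ++ y :: v := hq
  rcases path_split' l₂ n₂ s y v hq' with ⟨hs, hy, hv⟩ | ⟨w, hw⟩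
  · -- `y` is the last (even) entry of `b`'s path
    rcases path_split' l₁ n₁ s x u hp' with ⟨hs', hx, hu⟩ | ⟨w, hw⟩
    · -- Case (i): `a` and `b` are sibling leaves
      have hl : l₁ = l₂ := by
        have : List.map (fun j => 2 * j + 1) l₁ = List.map (fun j => 2 * j + 1) l₂ :=
          hs' ▸ hs
        exact List.map_injective_iff.mpr (fun p q h => by omega) this
      subst hl
      have hn : n₁ < n₂ := by omega
      refine ⟨(l₁ ++ [n₁], 0), (l₁ ++ [n₁, 0], 0), ?_⟩
      set P := List.map (fun j => 2 * j + 1) l₁ with hP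
      have e1 : leafPath (l₁, n₁) = P ++ (2 * n₁) :: [] := by simp [leafPath, hP]
      have e2 : leafPath (l₁, n₂) = P ++ (2 * n₂) :: [] := by simp [leafPath, hP]
      have e3 : leafPath ((l₁ ++ [n₁], 0) : TreeLeaf) = P ++ (2 * n₁ + 1) :: [0] := by
        simp [leafPath, hP]
      have e4 : leafPath ((l₁ ++ [n₁, 0], 0) : TreeLeaf) = P ++ (2 * n₁ + 1) :: [1, 0] := by
        simp [leafPath, hP]
      have hac : leafLt (l₁, n₁) (l₁ ++ [n₁], 0) := by
        unfold leafLt; rw [e1, e3]; exact lex_of_lt' P _ _ (by omega)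
      have hcd : leafLt ((l₁ ++ [n₁], 0) : TreeLeaf) (l₁ ++ [n₁, 0], 0) := by
        unfold leafLt; rw [e3, e4]
        have r3 : P ++ (2 * n₁ + 1) :: [0] = (P ++ [2 * n₁ + 1]) ++ (0 : ℕ) :: [] := by simp
        have r4 : P ++ (2 * n₁ + 1) :: [1, 0] = (P ++ [2 * n₁ + 1]) ++ (1 : ℕ) :: [0] := by simp
        rw [r3, r4]; exact lex_of_lt' _ _ _ (by omega)
      have hdb : leafLt ((l₁ ++ [n₁, 0], 0) : TreeLeaf) (l₁, n₂) := by
        unfold leafLt; rw [e4, e2]; exact lex_of_lt' P _ _ (by omega)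
      have cAC : cpl (leafPath (l₁, n₁)) (leafPath ((l₁ ++ [n₁], 0) : TreeLeaf)) = P.length := by
        rw [e1, e3]; exact cpl_append' P _ _ _ _ (by omega)
      have cCD : cpl (leafPath ((l₁ ++ [n₁], 0) : TreeLeaf))
          (leafPath ((l₁ ++ [n₁, 0], 0) : TreeLeaf)) = P.length + 1 := by
        rw [e3, e4]
        have r3 : P ++ (2 * n₁ + 1) :: [0] = (P ++ [2 * n₁ + 1]) ++ (0 : ℕ) :: [] := by simp
        have r4 : P ++ (2 * n₁ + 1) :: [1, 0] = (P ++ [2 * n₁ + 1]) ++ (1 : ℕ) :: [0] := by simp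
        rw [r3, r4, cpl_append' _ _ _ _ _ (by omega)]
        simp
      have cDB : cpl (leafPath ((l₁ ++ [n₁, 0], 0) : TreeLeaf)) (leafPath (l₁, n₂))
          = P.length := by
        rw [e4, e2]; exact cpl_append' P _ _ _ _ (by omega)
      have hrel : treeStruct.rel (some 0) ![(l₁, n₁), (l₁ ++ [n₁], 0), (l₁ ++ [n₁, 0], 0)] :=
        (rel_some_iff 0 _ _ _).mpr ⟨hac, hcd, by simp [cAC, cCD]⟩
      have hrel' : ¬ treeStruct.rel (some 0)
          ![((l₁ ++ [n₁], 0) : TreeLeaf), (l₁ ++ [n₁, 0], 0), (l₁, n₂)] := by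
        intro h
        have h3 := ((rel_some_iff 0 _ _ _).mp h).2.2
        simp [cCD, cDB] at h3
      refine ⟨leafLt_ne hac, leafLt_ne (leafLt_trans' hac hcd), ?_, ?_, leafLt_ne hcd, ?_⟩
      · exact fun h => leafLt_ne (leafLt_trans' hcd hdb) h.symm
      · exact fun h => leafLt_ne hdb h.symm
      · have hset : (insert ((l₁, n₂) : TreeLeaf) {((l₁ ++ [n₁], 0) : TreeLeaf), (l₁ ++ [n₁, 0], 0)}
            : Set TreeLeaf) = {((l₁ ++ [n₁], 0) : TreeLeaf), (l₁ ++ [n₁, 0], 0), (l₁, n₂)} := by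
          exact Set.ext fun t => ⟨fun h => Or.elim h (fun h => Or.inr (Or.inr h)) (fun h => Or.imp_right Or.inl h), fun h => Or.elim h (fun h => Or.inr (Or.inl h)) (fun h => Or.elim h (fun h => Or.inr (Or.inr h)) (fun h => Or.inl h))⟩
        convert not_iso hac hcd hcd hdb 0 hrel hrel' using 2
        exact hset
    · -- Case C_a: `a`'s path continues below the divergence; pick `c, d` just right of `a`
      subst hy hv
      refine ⟨(l₁ ++ [n₁], 0), (l₁ ++ [n₁ + 1], 0), ?_⟩
      set P := List.map (fun j => 2 * j + 1) l₁ with hP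
      have e1 : leafPath (l₁, n₁) = P ++ (2 * n₁) :: [] := by simp [leafPath, hP]
      have e3 : leafPath ((l₁ ++ [n₁], 0) : TreeLeaf) = P ++ (2 * n₁ + 1) :: [0] := by
        simp [leafPath, hP]
      have e4 : leafPath ((l₁ ++ [n₁ + 1], 0) : TreeLeaf) = P ++ (2 * (n₁ + 1) + 1) :: [0] := by
        simp [leafPath, hP]
      have e4' : leafPath ((l₁ ++ [n₁ + 1], 0) : TreeLeaf)
          = s ++ x :: (w ++ (2 * (n₁ + 1) + 1) :: [0]) := by
        rw [e4, hw]; simp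
      have hac : leafLt (l₁, n₁) (l₁ ++ [n₁], 0) := by
        unfold leafLt; rw [e1, e3]; exact lex_of_lt' P _ _ (by omega)
      have hcd : leafLt ((l₁ ++ [n₁], 0) : TreeLeaf) (l₁ ++ [n₁ + 1], 0) := by
        unfold leafLt; rw [e3, e4]; exact lex_of_lt' P _ _ (by omega)
      have hdb : leafLt ((l₁ ++ [n₁ + 1], 0) : TreeLeaf) (l₂, n₂) := by
        unfold leafLt; rw [e4', hq]; exact lex_of_lt' s _ _ hxy
      have cAC : cpl (leafPath (l₁, n₁)) (leafPath ((l₁ ++ [n₁], 0) : TreeLeaf)) = P.length := by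
        rw [e1, e3]; exact cpl_append' P _ _ _ _ (by omega)
      have cCD : cpl (leafPath ((l₁ ++ [n₁], 0) : TreeLeaf))
          (leafPath ((l₁ ++ [n₁ + 1], 0) : TreeLeaf)) = P.length := by
        rw [e3, e4]; exact cpl_append' P _ _ _ _ (by omega)
      have cDB : cpl (leafPath ((l₁ ++ [n₁ + 1], 0) : TreeLeaf)) (leafPath (l₂, n₂))
          = s.length := by
        rw [e4', hq]; exact cpl_append' s _ _ _ _ (by omega)
      have hlen : s.length < P.length := by
        have h' := congrArg List.length hw
        simp at h'
        omega
      have hrel : treeStruct.rel (some 1) ![(l₁, n₁), (l₁ ++ [n₁], 0), (l₁ ++ [n₁ + 1], 0)] :=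
        (rel_some_iff 1 _ _ _).mpr ⟨hac, hcd, by simp [cAC, cCD]⟩
      have hrel' : ¬ treeStruct.rel (some 1)
          ![((l₁ ++ [n₁], 0) : TreeLeaf), (l₁ ++ [n₁ + 1], 0), (l₂, n₂)] := by
        intro h
        have h3 := ((rel_some_iff 1 _ _ _).mp h).2.2
        simp [cCD, cDB] at h3
        omega
      refine ⟨leafLt_ne hac, leafLt_ne (leafLt_trans' hac hcd), ?_, ?_, leafLt_ne hcd, ?_⟩
      · exact fun h => leafLt_ne (leafLt_trans' hcd hdb) h.symm
      · exact fun h => leafLt_ne hdb h.symm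
      · have hset : (insert ((l₂, n₂) : TreeLeaf)
            {((l₁ ++ [n₁], 0) : TreeLeaf), (l₁ ++ [n₁ + 1], 0)} : Set TreeLeaf)
            = {((l₁ ++ [n₁], 0) : TreeLeaf), (l₁ ++ [n₁ + 1], 0), (l₂, n₂)} := by
          exact Set.ext fun t => ⟨fun h => Or.elim h (fun h => Or.inr (Or.inr h)) (fun h => Or.imp_right Or.inl h), fun h => Or.elim h (fun h => Or.inr (Or.inl h)) (fun h => Or.elim h (fun h => Or.inr (Or.inr h)) (fun h => Or.inl h))⟩
        convert not_iso hac hcd hcd hdb 1 hrel hrel' using 2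
        exact hset
  · -- Case C_b: `b`'s path continues below the divergence; pick `c, d` just right of `b`
    refine ⟨(l₂ ++ [n₂], 0), (l₂ ++ [n₂ + 1], 0), ?_⟩
    set M := List.map (fun j => 2 * j + 1) l₂ with hM
    have e2 : leafPath (l₂, n₂) = M ++ (2 * n₂) :: [] := by simp [leafPath, hM]
    have e3 : leafPath ((l₂ ++ [n₂], 0) : TreeLeaf) = M ++ (2 * n₂ + 1) :: [0] := by
      simp [leafPath, hM]
    have e3' : leafPath ((l₂ ++ [n₂], 0) : TreeLeaf)
        = s ++ y :: (w ++ (2 * n₂ + 1) :: [0]) := by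
      rw [e3, hw]; simp
    have e4 : leafPath ((l₂ ++ [n₂ + 1], 0) : TreeLeaf) = M ++ (2 * (n₂ + 1) + 1) :: [0] := by
      simp [leafPath, hM]
    have hbc : leafLt (l₂, n₂) (l₂ ++ [n₂], 0) := by
      unfold leafLt; rw [e2, e3]; exact lex_of_lt' M _ _ (by omega)
    have hcd : leafLt ((l₂ ++ [n₂], 0) : TreeLeaf) (l₂ ++ [n₂ + 1], 0) := by
      unfold leafLt; rw [e3, e4]; exact lex_of_lt' M _ _ (by omega)
    have hac : leafLt (l₁, n₁) (l₂ ++ [n₂], 0) := leafLt_trans' hab hbc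
    have cAC : cpl (leafPath (l₁, n₁)) (leafPath ((l₂ ++ [n₂], 0) : TreeLeaf)) = s.length := by
      rw [e3', hp]; exact cpl_append' s _ _ _ _ (by omega)
    have cBC : cpl (leafPath (l₂, n₂)) (leafPath ((l₂ ++ [n₂], 0) : TreeLeaf)) = M.length := by
      rw [e2, e3]; exact cpl_append' M _ _ _ _ (by omega)
    have cCD : cpl (leafPath ((l₂ ++ [n₂], 0) : TreeLeaf))
        (leafPath ((l₂ ++ [n₂ + 1], 0) : TreeLeaf)) = M.length := by
      rw [e3, e4]; exact cpl_append' M _ _ _ _ (by omega)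
    have hlen : s.length < M.length := by
      have h' := congrArg List.length hw
      simp at h'
      omega
    have hrel : treeStruct.rel (some 0) ![(l₁, n₁), (l₂ ++ [n₂], 0), (l₂ ++ [n₂ + 1], 0)] :=
      (rel_some_iff 0 _ _ _).mpr ⟨hac, hcd, by simp [cAC, cCD]; omega⟩
    have hrel' : ¬ treeStruct.rel (some 0)
        ![(l₂, n₂), ((l₂ ++ [n₂], 0) : TreeLeaf), (l₂ ++ [n₂ + 1], 0)] := by
      intro h
      have h3 := ((rel_some_iff 0 _ _ _).mp h).2.2
      simp [cBC, cCD] at h3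
    refine ⟨leafLt_ne hac, leafLt_ne (leafLt_trans' hac hcd), leafLt_ne hbc,
      leafLt_ne (leafLt_trans' hbc hcd), leafLt_ne hcd, ?_⟩
    exact not_iso hac hcd hbc hcd 0 hrel hrel'

private lemma core {F : Set TreeLeaf} {a b : TreeLeaf} (ha : a ∈ F) (hb : b ∈ F)
    (hab : leafLt a b) : ¬ IsMonoPart treeStruct F := by
  intro hmono
  obtain ⟨c, d, hac, had, hbc, hbd, hcd, hni⟩ := key a b hab
  have hfinA : (insert a {c, d} : Set TreeLeaf).Finite :=
    (Set.finite_singleton d).insert c |>.insert a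
  have hfinA' : (insert b {c, d} : Set TreeLeaf).Finite :=
    (Set.finite_singleton d).insert c |>.insert b
  have hcardA : (insert a {c, d} : Set TreeLeaf).ncard = 3 := by
    rw [Set.ncard_insert_of_notMem (by simp [hac, had]), Set.ncard_pair hcd]
  have hcardA' : (insert b {c, d} : Set TreeLeaf).ncard = 3 := by
    rw [Set.ncard_insert_of_notMem (by simp [hbc, hbd]), Set.ncard_pair hcd]
  have hdiff : (insert a {c, d} : Set TreeLeaf) \ F = (insert b {c, d} : Set TreeLeaf) \ F := by
    ext t
    simp only [Set.mem_diff, Set.mem_insert_iff, Set.mem_singleton_iff]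
    constructor
    · rintro ⟨rfl | rfl | rfl, h2⟩
      · exact absurd ha h2
      · exact ⟨Or.inr (Or.inl rfl), h2⟩
      · exact ⟨Or.inr (Or.inr rfl), h2⟩
    · rintro ⟨rfl | rfl | rfl, h2⟩
      · exact absurd hb h2
      · exact ⟨Or.inr (Or.inl rfl), h2⟩
      · exact ⟨Or.inr (Or.inr rfl), h2⟩
  exact hni (hmono _ _ hfinA hfinA' (hcardA.trans hcardA'.symm) hdiff)

end Aux

/-- the minimal monomorphic decomposition of the relational structure on the
leaves of the infinite tree `T` is the partition into singletons: every monomorphic part is a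
subsingleton; in particular no two-element subset of the base set is a monomorphic part. -/
theorem treeStruct_monoParts_trivial :
    (∀ F : Set TreeLeaf, IsMonoPart treeStruct F → F.Subsingleton) ∧
    (∀ a b : TreeLeaf, a ≠ b → ¬ IsMonoPart treeStruct {a, b}) := by
  have main : ∀ F : Set TreeLeaf, IsMonoPart treeStruct F → F.Subsingleton := by
    intro F hF x hx y hy
    by_contra hne
    rcases leafLt_total x y with h | h | h
    · exact core hx hy h hF
    · exact hne h
    · exact core hy hx h hF
  refine ⟨main, fun a b hne hmono => ?_⟩
  exact hne (main _ hmono (by simp) (by simp))
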